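/- Let Γ be a subgroup of G with ρ(Γ) ⊆ Γ, χ : Γ → U(1), (ρ,τ) an equivariant pair with τ C^∞, ν, μ ∈ ℝ, B := ν + μ(|∂τ/∂z(0)|² − |∂τ/∂z̄(0)|²), and let φ : ℂ → ℝ be a C^∞ gauge (i.e. i·Dφ(z)(v) = −(1/2)(conj(S(z))·v − S(z)·conj(v)) + (B/2)(conj(z)·v − z·conj(v)) for all z, v). Define χ_τ(γ) := χ(γ)·exp(i(φ(γ·0) − φ(0)))·j^{ν−B}(γ,0)·j^{μ}(ρ(γ),τ(0)). Then a C^∞ function F : ℂ → ℂ satisfies F(γ·z) = χ(γ)·j^ν(γ,z)·j^μ(ρ(γ),τ(z))·F(z) for all γ ∈ Γ, z ∈ ℂ, if and only if the function G_F(z) := exp(iφ(z))·F(z) satisfies G_F(γ·z) = χ_τ(γ)·j^{B}(γ,z)·G_F(z) for all γ ∈ Γ, z ∈ ℂ. -/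

import Mathlib

open Complex MeasureTheory ComplexConjugate

noncomputable section

/-- The group `G = U(1) ⋉ ℂ`, as pairs `[a, b]` with `a ∈ U(1)`, `b ∈ ℂ`. -/
abbrev G1 : Type := Circle × ℂ

/-- Multiplication `[a,b][a',b'] = [aa', ab' + b]` in `G`. -/
def Gmul (g h : G1) : G1 := (g.1 * h.1, (g.1 : ℂ) * h.2 + g.2)

/-- Inverse `[a,b]⁻¹ = [a⁻¹, -a⁻¹ b]` in `G`. -/
def Ginv (g : G1) : G1 := (g.1⁻¹, -((g.1⁻¹ : Circle) : ℂ) * g.2)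

/-- The action `[a,b]·z = a z + b` of `G` on `ℂ`. -/
def Gact (g : G1) (z : ℂ) : ℂ := (g.1 : ℂ) * z + g.2

/-- `ρ : G → G` is a group homomorphism. -/
def IsGHom (ρ : G1 → G1) : Prop := ∀ g h, ρ (Gmul g h) = Gmul (ρ g) (ρ h)

/-- `(ρ, τ)` is an equivariant pair: `ρ` is a `G`-endomorphism and
`τ(g·z) = ρ(g)·τ(z)` for all `g ∈ G`, `z ∈ ℂ`. -/
def Equivariant (ρ : G1 → G1) (τ : ℂ → ℂ) : Prop :=
  IsGHom ρ ∧ ∀ g z, τ (Gact g z) = Gact (ρ g) (τ z)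

/-- The automorphy factor `j^α(g,z) = exp(-iα Im(z conj(g⁻¹·0)))`. -/
def jfac (α : ℝ) (g : G1) (z : ℂ) : ℂ :=
  Complex.exp (-Complex.I * α * ((z * conj (Gact (Ginv g) 0)).im : ℝ))

/-- Wirtinger derivative `∂f/∂z`. -/
def wdz (f : ℂ → ℂ) (z : ℂ) : ℂ :=
  (1/2 : ℂ) * (fderiv ℝ f z 1 - Complex.I * fderiv ℝ f z Complex.I)

/-- Wirtinger derivative `∂f/∂z̄`. -/
def wdzbar (f : ℂ → ℂ) (z : ℂ) : ℂ :=
  (1/2 : ℂ) * (fderiv ℝ f z 1 + Complex.I * fderiv ℝ f z Complex.I)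

/-- `S(z) = νz + μ(τ(z) ∂τ̄/∂z̄(z) − τ̄(z) ∂τ/∂z̄(z))`. -/
def Sfun (ν μ : ℝ) (τ : ℂ → ℂ) (z : ℂ) : ℂ :=
  (ν : ℂ) * z + (μ : ℂ) * (τ z * wdzbar (fun w => conj (τ w)) z - conj (τ z) * wdzbar τ z)

/-- Euclidean Laplacian `Δh = 4 ∂²h/∂z∂z̄`. -/
def lap (f : ℂ → ℂ) (z : ℂ) : ℂ := 4 * wdz (wdzbar f) z

/-- The mixed magnetic Schrödinger operator `Δ^{ν,μ}_τ`. -/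
def DeltaTau (ν μ : ℝ) (τ f : ℂ → ℂ) (z : ℂ) : ℂ :=
  lap f z
    + 2 * (Sfun ν μ τ z * wdz f z - conj (Sfun ν μ τ z) * wdzbar f z)
    - (‖Sfun ν μ τ z‖ : ℂ)^2 * f z
    + (μ : ℂ) * (τ z * lap (fun w => conj (τ w)) z - conj (τ z) * lap τ z) * f z

/-- The Landau Hamiltonian `Δ_B`. -/
def DeltaB (B : ℝ) (f : ℂ → ℂ) (z : ℂ) : ℂ :=
  lap f z + 2 * (B : ℂ) * (z * wdz f z - conj z * wdzbar f z)
    - (B : ℂ)^2 * (‖z‖ : ℂ)^2 * f z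

/-- The magnetic field `B(z) = ν + μ(|∂τ/∂z|² − |∂τ/∂z̄|²)`. -/
def Bfield (ν μ : ℝ) (τ : ℂ → ℂ) (z : ℂ) : ℝ :=
  ν + μ * ((‖wdz τ z‖)^2 - (‖wdzbar τ z‖)^2)

/-- `φ : ℂ → ℝ` is a smooth gauge: `θ^{ν,μ}_τ = θ_B + i dφ`, i.e.
`i·Dφ(z)(v) = −(1/2)(conj(S(z))v − S(z)conj(v)) + (B/2)(z̄v − z v̄)`. -/
def IsGauge (ν μ B : ℝ) (τ : ℂ → ℂ) (φ : ℂ → ℝ) : Prop :=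
  ContDiff ℝ (⊤ : ℕ∞) φ ∧ ∀ z v : ℂ,
    Complex.I * ((fderiv ℝ φ z v : ℝ) : ℂ) =
      -(1/2 : ℂ) * (conj (Sfun ν μ τ z) * v - Sfun ν μ τ z * conj v)
      + ((B : ℂ)/2) * (conj z * v - z * conj v)

/-- The pseudo-character
`χ_τ(γ) = χ(γ) exp(i(φ(γ·0) − φ(0))) j^{ν−B}(γ,0) j^μ(ρ(γ),τ(0))`. -/
def chiTau (ν μ B : ℝ) (ρ : G1 → G1) (τ : ℂ → ℂ) (φ : ℂ → ℝ) (χ : G1 → Circle)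
    (γ : G1) : ℂ :=
  (χ γ : ℂ) * Complex.exp (Complex.I * ((φ (Gact γ 0) - φ 0 : ℝ) : ℂ)) *
    jfac (ν - B) γ 0 * jfac μ (ρ γ) (τ 0)

/- ------------------- auxiliary lemmas ------------------- -/

lemma conj_decomp (u : ℂ) : conj u = (u.re : ℂ) - u.im * Complex.I := by
  apply Complex.ext <;> simp

lemma fderiv_eq_wdz (f : ℂ → ℂ) (z u : ℂ) :
    fderiv ℝ f z u = wdz f z * u + wdzbar f z * conj u := by
  have key : ∀ x y : ℝ, fderiv ℝ f z ((x:ℂ) + y * Complex.I)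
      = wdz f z * ((x:ℂ) + y * Complex.I) + wdzbar f z * ((x:ℂ) - y * Complex.I) := by
    intro x y
    rw [show ((x:ℂ) + (y:ℂ) * Complex.I) = x • (1:ℂ) + y • Complex.I by
      simp [Complex.real_smul], map_add, _root_.map_smul, _root_.map_smul]
    unfold wdz wdzbar
    simp only [Complex.real_smul]
    linear_combination (y : ℂ) * fderiv ℝ f z Complex.I * Complex.I_sq
  calc fderiv ℝ f z u = fderiv ℝ f z ((u.re : ℂ) + u.im * Complex.I) := by
        rw [Complex.re_add_im]
    _ = wdz f z * ((u.re:ℂ) + u.im * Complex.I) + wdzbar f z * ((u.re:ℂ) - u.im * Complex.I) :=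
        key _ _
    _ = wdz f z * u + wdzbar f z * conj u := by rw [Complex.re_add_im, ← conj_decomp]

lemma fderiv_conj_comp (f : ℂ → ℂ) (z : ℂ) (hf : DifferentiableAt ℝ f z) (u : ℂ) :
    fderiv ℝ (fun w => conj (f w)) z u = conj (fderiv ℝ f z u) := by
  have h : HasFDerivAt (fun w => conj (f w))
      ((Complex.conjCLE : ℂ →L[ℝ] ℂ).comp (fderiv ℝ f z)) z := by
    exact (Complex.conjCLE.toContinuousLinearMap.hasFDerivAt).comp z hf.hasFDerivAt
  rw [h.fderiv]
  rfl

lemma wdzbar_conj (f : ℂ → ℂ) (z : ℂ) (hf : DifferentiableAt ℝ f z) :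
    wdzbar (fun w => conj (f w)) z = conj (wdz f z) := by
  unfold wdz wdzbar
  rw [fderiv_conj_comp f z hf, fderiv_conj_comp f z hf]
  simp only [map_mul, map_sub, map_one, Complex.conj_I, map_div₀, map_one, map_ofNat]
  ring

lemma affine_hasFDerivAt (a b z : ℂ) :
    HasFDerivAt (fun w : ℂ => a * w + b) (a • (1 : ℂ →L[ℝ] ℂ)) z := by
  have h : HasFDerivAt (id : ℂ → ℂ) (1 : ℂ →L[ℝ] ℂ) z := hasFDerivAt_id z
  exact (h.const_mul a).add_const b

lemma fderiv_equivar (f : ℂ → ℂ) (hf : Differentiable ℝ f) (a b a' b' : ℂ)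
    (heq : ∀ w, f (a * w + b) = a' * f w + b') (z u : ℂ) :
    fderiv ℝ f (a * z + b) (a * u) = a' * fderiv ℝ f z u := by
  have h1 : HasFDerivAt (fun w => f (a * w + b))
      ((fderiv ℝ f (a * z + b)).comp (a • (1 : ℂ →L[ℝ] ℂ))) z :=
    ((hf (a * z + b)).hasFDerivAt).comp z (affine_hasFDerivAt a b z)
  have h2 : HasFDerivAt (fun w => f (a * w + b)) (a' • fderiv ℝ f z) z := by
    have : (fun w => f (a * w + b)) = fun w => a' * f w + b' := funext heq
    rw [this]
    exact ((hf z).hasFDerivAt.const_mul a').add_const b'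
  have := h1.unique h2
  calc fderiv ℝ f (a * z + b) (a * u)
      = ((fderiv ℝ f (a * z + b)).comp (a • (1 : ℂ →L[ℝ] ℂ))) u := by
        simp [ContinuousLinearMap.comp_apply, smul_eq_mul]
    _ = (a' • fderiv ℝ f z) u := by rw [this]
    _ = a' * fderiv ℝ f z u := by simp [smul_eq_mul]

lemma wdz_equivar (f : ℂ → ℂ) (hf : Differentiable ℝ f) (a b a' b' : ℂ)
    (ha : a * conj a = 1)
    (heq : ∀ w, f (a * w + b) = a' * f w + b') (z : ℂ) :
    wdz f (a * z + b) = a' * conj a * wdz f z ∧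
    wdzbar f (a * z + b) = a' * a * wdzbar f z := by
  have h1 : fderiv ℝ f (a * z + b) 1 = a' * fderiv ℝ f z (conj a) := by
    have := fderiv_equivar f hf a b a' b' heq z (conj a)
    rwa [ha] at this
  have h2 : fderiv ℝ f (a * z + b) Complex.I
      = a' * fderiv ℝ f z (conj a * Complex.I) := by
    have := fderiv_equivar f hf a b a' b' heq z (conj a * Complex.I)
    rwa [show a * (conj a * Complex.I) = Complex.I by rw [← mul_assoc, ha, one_mul]] at this
  have e1 : wdz f (a * z + b) = (1/2 : ℂ) * (fderiv ℝ f (a * z + b) 1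
      - Complex.I * fderiv ℝ f (a * z + b) Complex.I) := rfl
  have e2 : wdzbar f (a * z + b) = (1/2 : ℂ) * (fderiv ℝ f (a * z + b) 1
      + Complex.I * fderiv ℝ f (a * z + b) Complex.I) := rfl
  constructor
  · rw [e1, h1, h2, fderiv_eq_wdz f z (conj a), fderiv_eq_wdz f z (conj a * Complex.I)]
    simp only [map_mul, Complex.conj_conj, Complex.conj_I]
    linear_combination ((1/2:ℂ) * a' * wdzbar f z * a
      - (1/2:ℂ) * a' * wdz f z * conj a) * Complex.I_sq
  · rw [e2, h1, h2, fderiv_eq_wdz f z (conj a), fderiv_eq_wdz f z (conj a * Complex.I)]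
    simp only [map_mul, Complex.conj_conj, Complex.conj_I]
    linear_combination ((1/2:ℂ) * a' * wdz f z * conj a
      - (1/2:ℂ) * a' * wdzbar f z * a) * Complex.I_sq

lemma Sfun_equivar (ν μ : ℝ) (τ : ℂ → ℂ) (hτ : Differentiable ℝ τ) (a b a' b' : ℂ)
    (ha : a * conj a = 1) (ha' : a' * conj a' = 1)
    (heq : ∀ w, τ (a * w + b) = a' * τ w + b') (z : ℂ) :
    Sfun ν μ τ (a * z + b) = a * Sfun ν μ τ z + (ν : ℂ) * b
      + (μ : ℂ) * a * (b' * conj a' * conj (wdz τ z) - conj b' * a' * wdzbar τ z) := by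
  have hP := (wdz_equivar τ hτ a b a' b' ha heq z).1
  have hQ := (wdz_equivar τ hτ a b a' b' ha heq z).2
  unfold Sfun
  rw [wdzbar_conj τ (a * z + b) (hτ _), wdzbar_conj τ z (hτ _), hP, hQ, heq z]
  simp only [map_mul, map_add, Complex.conj_conj]
  linear_combination ((μ:ℂ) * a * (τ z) * conj (wdz τ z)
    - (μ:ℂ) * a * conj (τ z) * wdzbar τ z) * ha'

lemma ImulIm (x : ℂ) : Complex.I * ((x.im : ℝ) : ℂ) = (x - conj x) / 2 := by
  rw [Complex.sub_conj]
  push_cast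
  ring

lemma Sfun_expand (ν μ : ℝ) (τ : ℂ → ℂ) (hτ : Differentiable ℝ τ) (z : ℂ) :
    Sfun ν μ τ z = (ν : ℂ) * z
      + (μ : ℂ) * (τ z * conj (wdz τ z) - conj (τ z) * wdzbar τ z) := by
  unfold Sfun
  rw [wdzbar_conj τ z (hτ z)]

/-- The key lemma: the gauge phase correction is constant. -/
lemma gauge_key (ν μ B : ℝ) (τ : ℂ → ℂ) (hτd : Differentiable ℝ τ) (φ : ℂ → ℝ)
    (hφd : Differentiable ℝ φ)
    (hgauge : ∀ z v : ℂ,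
      Complex.I * ((fderiv ℝ φ z v : ℝ) : ℂ) =
        -(1/2 : ℂ) * (conj (Sfun ν μ τ z) * v - Sfun ν μ τ z * conj v)
        + ((B : ℂ)/2) * (conj z * v - z * conj v))
    (a b a' b' : ℂ) (ha : a * conj a = 1) (ha' : a' * conj a' = 1)
    (heq : ∀ w, τ (a * w + b) = a' * τ w + b') (z : ℂ) :
    φ (a * z + b) - φ z - (ν - B) * (z * conj (-conj a * b)).im
      - μ * (τ z * conj (-conj a' * b')).im
    = φ b - φ 0 - μ * (τ 0 * conj (-conj a' * b')).im := by
  have ha0 : a ≠ 0 := by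
    intro h; rw [h] at ha; simp at ha
  have ha0' : a' ≠ 0 := by
    intro h; rw [h] at ha'; simp at ha'
  have hca : conj a = a⁻¹ := by
    field_simp; linear_combination ha
  have hca' : conj a' = a'⁻¹ := by
    field_simp; linear_combination ha'
  set c : ℂ := -conj a * b with hc
  set d : ℂ := -conj a' * b' with hd
  have key0 : ∀ w : ℂ, HasFDerivAt
      (fun w => φ (a * w + b) - φ w - (ν - B) * (conj c * w).im - μ * (conj d * τ w).im)
      (0 : ℂ →L[ℝ] ℝ) w := by
    intro w
    have h1 : HasFDerivAt (fun w => φ (a * w + b))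
        ((fderiv ℝ φ (a * w + b)).comp (a • (1 : ℂ →L[ℝ] ℂ))) w :=
      ((hφd (a * w + b)).hasFDerivAt).comp w (affine_hasFDerivAt a b w)
    have h2 : HasFDerivAt φ (fderiv ℝ φ w) w := (hφd w).hasFDerivAt
    have h3 : HasFDerivAt (fun w : ℂ => (ν - B) * (conj c * w).im)
        ((ν - B) • (Complex.imCLM.comp ((conj c) • (1 : ℂ →L[ℝ] ℂ)))) w := by
      have hb : HasFDerivAt (fun w : ℂ => (conj c * w).im)
          (Complex.imCLM.comp ((conj c) • (1 : ℂ →L[ℝ] ℂ))) w :=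
        (Complex.imCLM.comp ((conj c) • (1 : ℂ →L[ℝ] ℂ))).hasFDerivAt
      exact hb.const_mul (ν - B)
    have h4 : HasFDerivAt (fun w : ℂ => μ * (conj d * τ w).im)
        (μ • ((Complex.imCLM.comp ((conj d) • (1 : ℂ →L[ℝ] ℂ))).comp (fderiv ℝ τ w))) w := by
      have hb : HasFDerivAt (fun w : ℂ => (conj d * τ w).im)
          ((Complex.imCLM.comp ((conj d) • (1 : ℂ →L[ℝ] ℂ))).comp (fderiv ℝ τ w)) w :=
        ((Complex.imCLM.comp ((conj d) • (1 : ℂ →L[ℝ] ℂ))).hasFDerivAt).comp w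
          (hτd w).hasFDerivAt
      exact hb.const_mul μ
    have hψ := ((h1.sub h2).sub h3).sub h4
    refine hψ.congr_fderiv ?_
    symm
    ext v
    simp only [ContinuousLinearMap.sub_apply, ContinuousLinearMap.comp_apply,
      ContinuousLinearMap.smul_apply, ContinuousLinearMap.one_apply, smul_eq_mul,
      Complex.imCLM_apply, ContinuousLinearMap.zero_apply]
    -- real goal: D1 - D2 - D3 - D4 = 0
    have hIne : (Complex.I : ℂ) ≠ 0 := Complex.I_ne_zero
    have main : Complex.I * (((fderiv ℝ φ (a * w + b)) (a * v) - (fderiv ℝ φ w) v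
        - (ν - B) * (conj c * v).im - μ * (conj d * (fderiv ℝ τ w v)).im : ℝ) : ℂ) = 0 := by
      have expand : Complex.I * (((fderiv ℝ φ (a * w + b)) (a * v) - (fderiv ℝ φ w) v
          - (ν - B) * (conj c * v).im - μ * (conj d * (fderiv ℝ τ w v)).im : ℝ) : ℂ)
          = Complex.I * ((fderiv ℝ φ (a * w + b) (a * v) : ℝ) : ℂ)
            - Complex.I * ((fderiv ℝ φ w v : ℝ) : ℂ)
            - ((ν : ℂ) - B) * (Complex.I * (((conj c * v).im : ℝ) : ℂ))
            - (μ : ℂ) * (Complex.I * (((conj d * (fderiv ℝ τ w v)).im : ℝ) : ℂ)) := by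
        push_cast
        ring
      rw [expand, hgauge (a * w + b) (a * v), hgauge w v, ImulIm, ImulIm,
        Sfun_equivar ν μ τ hτd a b a' b' ha ha' heq w,
        Sfun_expand ν μ τ hτd w, fderiv_eq_wdz τ w v]
      simp only [map_mul, map_add, map_sub, map_neg, Complex.conj_conj,
        Complex.conj_ofReal, hc, hd]
      linear_combination (-(1/2:ℂ) * (((ν:ℂ) * conj w + (μ:ℂ) * (conj (τ w) * wdz τ w
          - τ w * conj (wdzbar τ w))) * v - ((ν:ℂ) * w + (μ:ℂ) * (τ w * conj (wdz τ w)
          - conj (τ w) * wdzbar τ w)) * conj v)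
        - ((μ:ℂ)/2) * (conj b' * a' * wdz τ w - b' * conj a' * conj (wdzbar τ w)) * v
        + ((μ:ℂ)/2) * (b' * conj a' * conj (wdz τ w) - conj b' * a' * wdzbar τ w) * conj v
        + ((B:ℂ)/2) * (conj w * v - w * conj v)) * ha
    have := mul_eq_zero.mp main
    rcases this with h | h
    · exact absurd h hIne
    · exact_mod_cast h.symm
  have hdiff : Differentiable ℝ
      (fun w => φ (a * w + b) - φ w - (ν - B) * (conj c * w).im - μ * (conj d * τ w).im) :=
    fun w => (key0 w).differentiableAt
  have hconst := is_const_of_fderiv_eq_zero hdiff (fun w => (key0 w).fderiv) z 0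
  simp only [mul_zero, zero_add, Complex.zero_im, sub_zero] at hconst
  calc φ (a * z + b) - φ z - (ν - B) * (z * conj c).im - μ * (τ z * conj d).im
      = φ (a * z + b) - φ z - (ν - B) * (conj c * z).im - μ * (conj d * τ z).im := by
        rw [mul_comm (conj c) z, mul_comm (conj d) (τ z)]
    _ = φ b - φ 0 - μ * (conj d * τ 0).im := hconst
    _ = φ b - φ 0 - μ * (τ 0 * conj d).im := by rw [mul_comm (conj d) (τ 0)]

/-- lifting theorem: `F` is a `(Γ,χ)`-mixed automorphic function iff
`G_F = e^{iφ} F` is a classical `(Γ,χ_τ)`-automorphic function of weight `B`. -/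
theorem lifting_theorem
    (Γ : Set G1) (hone : ((1 : Circle), (0 : ℂ)) ∈ Γ)
    (hmul : ∀ g ∈ Γ, ∀ h ∈ Γ, Gmul g h ∈ Γ) (hinv : ∀ g ∈ Γ, Ginv g ∈ Γ)
    (ρ : G1 → G1) (τ : ℂ → ℂ) (hequiv : Equivariant ρ τ)
    (hρΓ : ∀ γ ∈ Γ, ρ γ ∈ Γ)
    (hτ : ContDiff ℝ (⊤ : ℕ∞) τ) (χ : G1 → Circle) (ν μ : ℝ)
    (φ : ℂ → ℝ) (hφ : IsGauge ν μ (Bfield ν μ τ 0) τ φ)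
    (F : ℂ → ℂ) (hF : ContDiff ℝ (⊤ : ℕ∞) F) :
    (∀ γ ∈ Γ, ∀ z : ℂ,
        F (Gact γ z) = (χ γ : ℂ) * jfac ν γ z * jfac μ (ρ γ) (τ z) * F z) ↔
      (∀ γ ∈ Γ, ∀ z : ℂ,
        Complex.exp (Complex.I * ((φ (Gact γ z) : ℝ) : ℂ)) * F (Gact γ z) =
          chiTau ν μ (Bfield ν μ τ 0) ρ τ φ χ γ * jfac (Bfield ν μ τ 0) γ z *
            (Complex.exp (Complex.I * ((φ z : ℝ) : ℂ)) * F z)) := by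
  obtain ⟨hφs, hgauge⟩ := hφ
  set B := Bfield ν μ τ 0 with hB
  have hτd : Differentiable ℝ τ := hτ.differentiable (by simp)
  have hφd : Differentiable ℝ φ := hφs.differentiable (by simp)
  have MI : ∀ γ : G1, ∀ z : ℂ,
      Complex.exp (Complex.I * ((φ (Gact γ z) : ℝ) : ℂ))
          * ((χ γ : ℂ) * jfac ν γ z * jfac μ (ρ γ) (τ z))
        = chiTau ν μ B ρ τ φ χ γ * jfac B γ z
          * Complex.exp (Complex.I * ((φ z : ℝ) : ℂ)) := by
    intro γ z
    have ha : (γ.1 : ℂ) * conj (γ.1 : ℂ) = 1 := by rw [Complex.mul_conj]; simp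
    have ha' : ((ρ γ).1 : ℂ) * conj ((ρ γ).1 : ℂ) = 1 := by rw [Complex.mul_conj]; simp
    have heq : ∀ w, τ ((γ.1 : ℂ) * w + γ.2) = ((ρ γ).1 : ℂ) * τ w + (ρ γ).2 :=
      fun w => hequiv.2 γ w
    have hkey := gauge_key ν μ B τ hτd φ hφd hgauge (γ.1 : ℂ) γ.2 ((ρ γ).1 : ℂ) (ρ γ).2
      ha ha' heq z
    have hc1 : Gact (Ginv γ) 0 = -conj (↑γ.1 : ℂ) * γ.2 := by
      have e : Gact (Ginv γ) 0 = (↑(γ.1⁻¹) : ℂ) * 0 + -(↑(γ.1⁻¹) : ℂ) * γ.2 := rfl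
      rw [e, Circle.coe_inv_eq_conj]; ring
    have hc2 : Gact (Ginv (ρ γ)) 0 = -conj (↑(ρ γ).1 : ℂ) * (ρ γ).2 := by
      have e : Gact (Ginv (ρ γ)) 0
          = (↑((ρ γ).1⁻¹) : ℂ) * 0 + -(↑((ρ γ).1⁻¹) : ℂ) * (ρ γ).2 := rfl
      rw [e, Circle.coe_inv_eq_conj]; ring
    have hkeyR : φ (Gact γ z) - φ z - (ν - B) * (z * conj (Gact (Ginv γ) 0)).im
        - μ * (τ z * conj (Gact (Ginv (ρ γ)) 0)).im
        = φ (Gact γ 0) - φ 0 - μ * (τ 0 * conj (Gact (Ginv (ρ γ)) 0)).im := by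
      rw [hc1, hc2]
      simpa [Gact] using hkey
    have hkeyC : ((φ (Gact γ z) : ℝ) : ℂ) - ((φ z : ℝ) : ℂ)
        - ((ν : ℂ) - (B : ℂ)) * (((z * conj (Gact (Ginv γ) 0)).im : ℝ) : ℂ)
        - (μ : ℂ) * (((τ z * conj (Gact (Ginv (ρ γ)) 0)).im : ℝ) : ℂ)
        = ((φ (Gact γ 0) : ℝ) : ℂ) - ((φ 0 : ℝ) : ℂ)
          - (μ : ℂ) * (((τ 0 * conj (Gact (Ginv (ρ γ)) 0)).im : ℝ) : ℂ) := by
      exact_mod_cast congrArg (fun r : ℝ => (r : ℂ)) hkeyR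
    simp only [chiTau, jfac]
    have hexp : Complex.exp (Complex.I * ((φ (Gact γ z) : ℝ) : ℂ)
          + (-Complex.I * (ν : ℂ) * (((z * conj (Gact (Ginv γ) 0)).im : ℝ) : ℂ))
          + (-Complex.I * (μ : ℂ) * (((τ z * conj (Gact (Ginv (ρ γ)) 0)).im : ℝ) : ℂ)))
        = Complex.exp (Complex.I * ((φ (Gact γ 0) - φ 0 : ℝ) : ℂ)
          + (-Complex.I * ((ν - B : ℝ) : ℂ) * ((((0:ℂ) * conj (Gact (Ginv γ) 0)).im : ℝ) : ℂ))
          + (-Complex.I * (μ : ℂ) * (((τ 0 * conj (Gact (Ginv (ρ γ)) 0)).im : ℝ) : ℂ))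
          + (-Complex.I * (B : ℂ) * (((z * conj (Gact (Ginv γ) 0)).im : ℝ) : ℂ))
          + Complex.I * ((φ z : ℝ) : ℂ)) := by
      congr 1
      simp only [zero_mul, Complex.zero_im, Complex.ofReal_zero, mul_zero]
      push_cast
      linear_combination Complex.I * hkeyC
    rw [Complex.exp_add, Complex.exp_add, Complex.exp_add, Complex.exp_add,
      Complex.exp_add, Complex.exp_add] at hexp
    linear_combination (χ γ : ℂ) * hexp
  constructor
  · intro h γ hγ z
    rw [h γ hγ z]
    linear_combination (F z) * (MI γ z)
  · intro h γ hγ z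
    have h2 := h γ hγ z
    have hexpne : Complex.exp (Complex.I * ((φ (Gact γ z) : ℝ) : ℂ)) ≠ 0 :=
      Complex.exp_ne_zero _
    apply mul_left_cancel₀ hexpne
    linear_combination h2 - F z * MI γ z
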